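/- Let (t_k) be a sequence of positive reals with t_k → 0, and for each k let (x^k,y^k) be a Karush–Kuhn–Tucker point of the Scholtes-type regularization S(t_k) with multipliers (λ^k,μ^k,η^k,ν^k) (multipliers not indexed by an active index set are set to zero). Suppose (x^k,y^k) → (x̄,ȳ) and MPOC-LICQ holds at (x̄,ȳ). Then (x̄,ȳ) is a T-stationary point of the regularized continuous reformulation R with multipliers (λ̄,μ̄,σ̄,ϱ̄) satisfying: (a) λ^k → λ̄ and μ^k → μ̄; (b) (η≥,k_i − η≤,k_i)·y^k_i → σ̄_{1,i} for all i ∈ a01(x̄,ȳ); (c) ν^k_i + (η≥,k_i − η≤,k_i)·x^k_i → σ̄_{2,i} for all i ∈ a10(x̄,ȳ); (d) (η≥,k_i − η≤,k_i)·y^k_i → ϱ̄_{1,i} and ν^k_i + (η≥,k_i − η≤,k_i)·x^k_i → ϱ̄_{2,i} for all i ∈ a00(x̄,ȳ). -/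

import Mathlib

open scoped Classical
open Finset Filter Topology

noncomputable section
namespace Scholtes

/-- Vectors in ℝⁿ. -/
abbrev Vec (n : ℕ) := Fin n → ℝ

variable {n : ℕ} {P Q : Type*} [Fintype P] [Fintype Q]

/-- Euclidean dot product. -/
def dot (u v : Vec n) : ℝ := ∑ i, u i * v i

/-- Gradient: vector of partial derivatives. -/
def grad (f : Vec n → ℝ) (x : Vec n) : Vec n := fun i => fderiv ℝ f x (Pi.single i 1)

/-- Hessian bilinear form of `L` at `z`, evaluated at directions `ξ`, `ζ`. -/
def hess (L : Vec n × Vec n → ℝ) (z ξ ζ : Vec n × Vec n) : ℝ :=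
  fderiv ℝ (fun w => fderiv ℝ L w ξ) z ζ

/-- The pair vector (e_i, 0) ∈ ℝ²ⁿ. -/
def ex (i : Fin n) : Vec n × Vec n := (Pi.single i 1, 0)

/-- The pair vector (0, e_i) ∈ ℝ²ⁿ. -/
def ey (i : Fin n) : Vec n × Vec n := (0, Pi.single i 1)

/-- The pair vector (0, e) ∈ ℝ²ⁿ, where e is the all-ones vector. -/
def eAll : Vec n × Vec n := (0, fun _ => 1)

/-- The pair vector (y_i e_i, x_i e_i) ∈ ℝ²ⁿ. -/
def hvec (x y : Vec n) (i : Fin n) : Vec n × Vec n := (Pi.single i (y i), Pi.single i (x i))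

/-- The number of negative eigenvalues of the bilinear form `B` restricted to the
(sub)space `T`, expressed as the maximal dimension of a linear subspace of `T` on
which the associated quadratic form is negative definite. -/
def negIndex (B : (Vec n × Vec n) → (Vec n × Vec n) → ℝ) (T : (Vec n × Vec n) → Prop) : ℕ :=
  sSup {d : ℕ | ∃ W : Submodule ℝ (Vec n × Vec n),
    (∀ ξ ∈ W, T ξ) ∧ Module.finrank ℝ W = d ∧ ∀ ξ ∈ W, ξ ≠ 0 → B ξ ξ < 0}

/-- The data and standing assumptions of the paper: objective `f`, equality
constraints `h`, inequality constraints `g`, positive pairwise different linear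
coefficients `c`, cardinality bound `s` and regularization parameter `ε`. -/
structure Setting (n : ℕ) (P Q : Type*) [Fintype P] [Fintype Q] where
  f : Vec n → ℝ
  h : P → Vec n → ℝ
  g : Q → Vec n → ℝ
  c : Vec n
  s : ℕ
  ε : ℝ
  hn : 1 ≤ n
  hf : ContDiff ℝ 2 f
  hh : ∀ p, ContDiff ℝ 2 (h p)
  hg : ∀ q, ContDiff ℝ 2 (g q)
  hcpos : ∀ i, 0 < c i
  hcinj : Function.Injective c
  hs : s < n
  hεpos : 0 < ε
  hεle : ε ≤ 1 / ((n : ℝ) - s)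

/-- Index set a01: x̄_i = 0, ȳ_i > 0. -/
def a01 (x y : Vec n) : Finset (Fin n) := univ.filter fun i => x i = 0 ∧ 0 < y i

/-- Index set a10: x̄_i ≠ 0, ȳ_i = 0. -/
def a10 (x y : Vec n) : Finset (Fin n) := univ.filter fun i => x i ≠ 0 ∧ y i = 0

/-- Index set a00: x̄_i = 0, ȳ_i = 0. -/
def a00 (x y : Vec n) : Finset (Fin n) := univ.filter fun i => x i = 0 ∧ y i = 0

/-- Index set N(y): y_i = 0. -/
def Nact (y : Vec n) : Finset (Fin n) := univ.filter fun i => y i = 0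

/-- Index set H≥(x,y): x_i y_i = −t. -/
def Hge (t : ℝ) (x y : Vec n) : Finset (Fin n) := univ.filter fun i => x i * y i = -t

/-- Index set H≤(x,y): x_i y_i = t. -/
def Hle (t : ℝ) (x y : Vec n) : Finset (Fin n) := univ.filter fun i => x i * y i = t

/-- Index set H(x,y) = H≥ ∪ H≤. -/
def Hact (t : ℝ) (x y : Vec n) : Finset (Fin n) := Hge t x y ∪ Hle t x y

/-- Active inequality constraints Q0(x). -/
def Q0 (D : Setting n P Q) (x : Vec n) : Finset Q := univ.filter fun q => D.g q x = 0

/-- Active upper bounds E(y): y_i = 1 + ε. -/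
def Eact (D : Setting n P Q) (y : Vec n) : Finset (Fin n) := univ.filter fun i => y i = 1 + D.ε

/-- Index set O(x,y) = complement of E(y) ∪ N(y) ∪ H(x,y). -/
def Oact (D : Setting n P Q) (t : ℝ) (x y : Vec n) : Finset (Fin n) :=
  (Eact D y ∪ Nact y ∪ Hact t x y)ᶜ

/-- Feasibility for the regularized continuous reformulation R. -/
def feasR (D : Setting n P Q) (x y : Vec n) : Prop :=
  (∀ p, D.h p x = 0) ∧ (∀ q, 0 ≤ D.g q x) ∧ ((n : ℝ) - D.s ≤ ∑ i, y i) ∧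
  (∀ i, x i * y i = 0) ∧ (∀ i, 0 ≤ y i ∧ y i ≤ 1 + D.ε)

/-- Feasibility for the Scholtes-type regularization S(t). -/
def feasS (D : Setting n P Q) (t : ℝ) (x y : Vec n) : Prop :=
  (∀ p, D.h p x = 0) ∧ (∀ q, 0 ≤ D.g q x) ∧ ((n : ℝ) - D.s ≤ ∑ i, y i) ∧
  (∀ i, -t ≤ x i * y i ∧ x i * y i ≤ t) ∧ (∀ i, 0 ≤ y i ∧ y i ≤ 1 + D.ε)

/-- Multipliers for T-stationarity (defined on the whole index ranges). -/
structure TMult (n : ℕ) (P Q : Type*) where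
  lam : P → ℝ
  mu1 : Q → ℝ
  mu2 : Fin n → ℝ
  mu3 : ℝ
  sig1 : Fin n → ℝ
  sig2 : Fin n → ℝ
  rho1 : Fin n → ℝ
  rho2 : Fin n → ℝ

/-- The T-stationarity equation (1) of Definition 2. -/
def TStatEq (D : Setting n P Q) (x y : Vec n) (M : TMult n P Q) : Prop :=
  ((grad D.f x, D.c) : Vec n × Vec n) =
    (∑ p, M.lam p • ((grad (D.h p) x, (0 : Vec n)) : Vec n × Vec n))
    + (∑ q ∈ Q0 D x, M.mu1 q • ((grad (D.g q) x, (0 : Vec n)) : Vec n × Vec n))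
    - (∑ i ∈ Eact D y, M.mu2 i • ey i)
    + M.mu3 • eAll
    + (∑ i ∈ a01 x y, M.sig1 i • ex i)
    + (∑ i ∈ a10 x y, M.sig2 i • ey i)
    + (∑ i ∈ a00 x y, (M.rho1 i • ex i + M.rho2 i • ey i))

/-- (x,y) is a T-stationary point of R with multipliers M. -/
def TStatAt (D : Setting n P Q) (x y : Vec n) (M : TMult n P Q) : Prop :=
  feasR D x y ∧
  (∀ q ∈ Q0 D x, 0 ≤ M.mu1 q) ∧
  (∀ i ∈ Eact D y, 0 ≤ M.mu2 i) ∧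
  0 ≤ M.mu3 ∧
  M.mu3 * ((∑ i, y i) - ((n : ℝ) - D.s)) = 0 ∧
  (∀ i ∈ a00 x y, M.rho1 i = 0 ∨ M.rho2 i ≤ 0) ∧
  TStatEq D x y M

/-- (x,y) is a T-stationary point of R. -/
def TStat (D : Setting n P Q) (x y : Vec n) : Prop := ∃ M, TStatAt D x y M

/-- MPOC-tailored LICQ at a feasible point (x,y) of R: the indicated family of
vectors in ℝ²ⁿ is linearly independent. -/
def MPOC_LICQ (D : Setting n P Q) (x y : Vec n) : Prop :=
  ∀ (lam : P → ℝ) (mu1 : Q → ℝ) (mu2 : Fin n → ℝ) (mu3 : ℝ) (s1 s2 : Fin n → ℝ),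
    ((∑ i, y i) ≠ (n : ℝ) - D.s → mu3 = 0) →
    (∑ p, lam p • ((grad (D.h p) x, (0 : Vec n)) : Vec n × Vec n))
    + (∑ q ∈ Q0 D x, mu1 q • ((grad (D.g q) x, (0 : Vec n)) : Vec n × Vec n))
    + (∑ i ∈ Eact D y, mu2 i • ey i)
    + mu3 • eAll
    + (∑ i ∈ a01 x y ∪ a00 x y, s1 i • ex i)
    + (∑ i ∈ a10 x y ∪ a00 x y, s2 i • ey i) = 0 →
    (∀ p, lam p = 0) ∧ (∀ q ∈ Q0 D x, mu1 q = 0) ∧ (∀ i ∈ Eact D y, mu2 i = 0) ∧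
    mu3 = 0 ∧ (∀ i ∈ a01 x y ∪ a00 x y, s1 i = 0) ∧ (∀ i ∈ a10 x y ∪ a00 x y, s2 i = 0)

/-- The Lagrange function L^R associated with the T-stationary point (x̄,ȳ)
and multipliers M. -/
def LagR (D : Setting n P Q) (xb yb : Vec n) (M : TMult n P Q) (z : Vec n × Vec n) : ℝ :=
  D.f z.1 + dot D.c z.2
    - (∑ p, M.lam p * D.h p z.1)
    - (∑ q ∈ Q0 D xb, M.mu1 q * D.g q z.1)
    + (∑ i ∈ Eact D yb, M.mu2 i * (z.2 i - (1 + D.ε)))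
    - M.mu3 * ((∑ i, z.2 i) - ((n : ℝ) - D.s))
    - (∑ i ∈ a01 xb yb, M.sig1 i * z.1 i)
    - (∑ i ∈ a10 xb yb, M.sig2 i * z.2 i)
    - (∑ i ∈ a00 xb yb, (M.rho1 i * z.1 i + M.rho2 i * z.2 i))

/-- Membership in the tangent space T^R at (x̄,ȳ). -/
def inTR (D : Setting n P Q) (x y : Vec n) (ξ : Vec n × Vec n) : Prop :=
  (∀ p, dot (grad (D.h p) x) ξ.1 = 0) ∧
  (∀ q ∈ Q0 D x, dot (grad (D.g q) x) ξ.1 = 0) ∧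
  (∀ i ∈ Eact D y, ξ.2 i = 0) ∧
  ((∑ i, y i) = (n : ℝ) - D.s → (∑ i, ξ.2 i) = 0) ∧
  (∀ i ∈ a00 x y ∪ a01 x y, ξ.1 i = 0) ∧
  (∀ i ∈ a00 x y ∪ a10 x y, ξ.2 i = 0)

/-- Nondegenerate T-stationary point with multipliers M (NDT1–NDT4). -/
def NondegTStatAt (D : Setting n P Q) (x y : Vec n) (M : TMult n P Q) : Prop :=
  TStatAt D x y M ∧
  MPOC_LICQ D x y ∧
  (∀ q ∈ Q0 D x, 0 < M.mu1 q) ∧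
  (∀ i ∈ Eact D y, 0 < M.mu2 i) ∧
  ((∑ i, y i) = (n : ℝ) - D.s → 0 < M.mu3) ∧
  (∀ i ∈ a00 x y, M.rho1 i ≠ 0 ∧ M.rho2 i < 0) ∧
  (∀ ξ, inTR D x y ξ → (∀ ζ, inTR D x y ζ → hess (LagR D x y M) (x, y) ξ ζ = 0) → ξ = 0)

/-- T-index: quadratic index (number of negative eigenvalues of the restricted
Hessian of L^R) plus the biactive index |a00|. -/
def TIndex (D : Setting n P Q) (x y : Vec n) (M : TMult n P Q) : ℕ :=
  negIndex (hess (LagR D x y M) (x, y)) (inTR D x y) + (a00 x y).card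

/-- Multipliers for KKT points of S(t) (defined on the whole index ranges). -/
structure SMult (n : ℕ) (P Q : Type*) where
  lam : P → ℝ
  mu1 : Q → ℝ
  mu2 : Fin n → ℝ
  mu3 : ℝ
  etaGe : Fin n → ℝ
  etaLe : Fin n → ℝ
  nu : Fin n → ℝ

/-- The KKT equation for S(t). -/
def KKTEq (D : Setting n P Q) (t : ℝ) (x y : Vec n) (M : SMult n P Q) : Prop :=
  ((grad D.f x, D.c) : Vec n × Vec n) =
    (∑ p, M.lam p • ((grad (D.h p) x, (0 : Vec n)) : Vec n × Vec n))
    + (∑ q ∈ Q0 D x, M.mu1 q • ((grad (D.g q) x, (0 : Vec n)) : Vec n × Vec n))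
    - (∑ i ∈ Eact D y, M.mu2 i • ey i)
    + M.mu3 • eAll
    + (∑ i ∈ Hge t x y, M.etaGe i • hvec x y i)
    - (∑ i ∈ Hle t x y, M.etaLe i • hvec x y i)
    + (∑ i ∈ Nact y, M.nu i • ey i)

/-- (x,y) is a KKT point of S(t) with multipliers M. -/
def KKTAt (D : Setting n P Q) (t : ℝ) (x y : Vec n) (M : SMult n P Q) : Prop :=
  feasS D t x y ∧
  (∀ q ∈ Q0 D x, 0 ≤ M.mu1 q) ∧
  (∀ i ∈ Eact D y, 0 ≤ M.mu2 i) ∧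
  0 ≤ M.mu3 ∧
  M.mu3 * ((∑ i, y i) - ((n : ℝ) - D.s)) = 0 ∧
  (∀ i ∈ Hge t x y, 0 ≤ M.etaGe i) ∧
  (∀ i ∈ Hle t x y, 0 ≤ M.etaLe i) ∧
  (∀ i ∈ Nact y, 0 ≤ M.nu i) ∧
  KKTEq D t x y M

/-- (x,y) is a KKT point of S(t). -/
def KKT (D : Setting n P Q) (t : ℝ) (x y : Vec n) : Prop := ∃ M, KKTAt D t x y M

/-- LICQ at a feasible point (x,y) of S(t). -/
def LICQ (D : Setting n P Q) (t : ℝ) (x y : Vec n) : Prop :=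
  ∀ (lam : P → ℝ) (mu1 : Q → ℝ) (mu2 : Fin n → ℝ) (mu3 : ℝ) (eta nu : Fin n → ℝ),
    ((∑ i, y i) ≠ (n : ℝ) - D.s → mu3 = 0) →
    (∑ p, lam p • ((grad (D.h p) x, (0 : Vec n)) : Vec n × Vec n))
    + (∑ q ∈ Q0 D x, mu1 q • ((grad (D.g q) x, (0 : Vec n)) : Vec n × Vec n))
    + (∑ i ∈ Eact D y, mu2 i • ey i)
    + mu3 • eAll
    + (∑ i ∈ Hact t x y, eta i • hvec x y i)
    + (∑ i ∈ Nact y, nu i • ey i) = 0 →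
    (∀ p, lam p = 0) ∧ (∀ q ∈ Q0 D x, mu1 q = 0) ∧ (∀ i ∈ Eact D y, mu2 i = 0) ∧
    mu3 = 0 ∧ (∀ i ∈ Hact t x y, eta i = 0) ∧ (∀ i ∈ Nact y, nu i = 0)

/-- The Lagrange function L^S associated with the KKT point (x̄,ȳ) of S(t)
and multipliers M. -/
def LagS (D : Setting n P Q) (t : ℝ) (xb yb : Vec n) (M : SMult n P Q)
    (z : Vec n × Vec n) : ℝ :=
  D.f z.1 + dot D.c z.2
    - (∑ p, M.lam p * D.h p z.1)
    - (∑ q ∈ Q0 D xb, M.mu1 q * D.g q z.1)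
    + (∑ i ∈ Eact D yb, M.mu2 i * (z.2 i - (1 + D.ε)))
    - M.mu3 * ((∑ i, z.2 i) - ((n : ℝ) - D.s))
    - (∑ i ∈ Hge t xb yb, M.etaGe i * (z.1 i * z.2 i + t))
    + (∑ i ∈ Hle t xb yb, M.etaLe i * (z.1 i * z.2 i - t))
    - (∑ i ∈ Nact yb, M.nu i * z.2 i)

/-- Membership in the tangent space T^S at (x,y) for S(t). -/
def inTS (D : Setting n P Q) (t : ℝ) (x y : Vec n) (ξ : Vec n × Vec n) : Prop :=
  (∀ p, dot (grad (D.h p) x) ξ.1 = 0) ∧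
  (∀ q ∈ Q0 D x, dot (grad (D.g q) x) ξ.1 = 0) ∧
  (∀ i ∈ Eact D y, ξ.2 i = 0) ∧
  ((∑ i, y i) = (n : ℝ) - D.s → (∑ i, ξ.2 i) = 0) ∧
  (∀ i ∈ Hact t x y, y i * ξ.1 i + x i * ξ.2 i = 0) ∧
  (∀ i ∈ Nact y, ξ.2 i = 0)

/-- Nondegenerate KKT point of S(t) with multipliers M (ND1–ND3). -/
def NondegKKTAt (D : Setting n P Q) (t : ℝ) (x y : Vec n) (M : SMult n P Q) : Prop :=
  KKTAt D t x y M ∧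
  LICQ D t x y ∧
  (∀ q ∈ Q0 D x, 0 < M.mu1 q) ∧
  (∀ i ∈ Eact D y, 0 < M.mu2 i) ∧
  (∀ i ∈ Hge t x y, 0 < M.etaGe i) ∧
  (∀ i ∈ Hle t x y, 0 < M.etaLe i) ∧
  (∀ i ∈ Nact y, 0 < M.nu i) ∧
  ((∑ i, y i) = (n : ℝ) - D.s → 0 < M.mu3) ∧
  (∀ ξ, inTS D t x y ξ → (∀ ζ, inTS D t x y ζ → hess (LagS D t x y M) (x, y) ξ ζ = 0) → ξ = 0)

/-- Quadratic index of a KKT point of S(t): number of negative eigenvalues of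
the restricted Hessian of L^S. -/
def QIdx (D : Setting n P Q) (t : ℝ) (x y : Vec n) (M : SMult n P Q) : ℕ :=
  negIndex (hess (LagS D t x y M) (x, y)) (inTS D t x y)

section AuxStatement9

variable {n : ℕ} {P Q : Type*} [Fintype P] [Fintype Q]

/-- Combined index type for the multiplier vector. -/
abbrev KIdx (n : ℕ) (P Q : Type*) := (P ⊕ Q) ⊕ ((Fin n ⊕ Unit) ⊕ (Fin n ⊕ Fin n))

abbrev iLam (p : P) : KIdx n P Q := Sum.inl (Sum.inl p)
abbrev iMu1 (q : Q) : KIdx n P Q := Sum.inl (Sum.inr q)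
abbrev iMu2 (i : Fin n) : KIdx n P Q := Sum.inr (Sum.inl (Sum.inl i))
abbrev iMu3 : KIdx n P Q := Sum.inr (Sum.inl (Sum.inr ()))
abbrev iS1 (i : Fin n) : KIdx n P Q := Sum.inr (Sum.inr (Sum.inl i))
abbrev iS2 (i : Fin n) : KIdx n P Q := Sum.inr (Sum.inr (Sum.inr i))

/-- The linear map sending a multiplier vector to the corresponding combination
of the vectors `v kk`. -/
def Tmap (v : KIdx n P Q → Vec n × Vec n) : (KIdx n P Q → ℝ) →ₗ[ℝ] (Vec n × Vec n) :=
  ∑ kk, (LinearMap.proj kk : ((KIdx n P Q → ℝ)) →ₗ[ℝ] ℝ).smulRight (v kk)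

lemma Tmap_apply (v : KIdx n P Q → Vec n × Vec n) (w : KIdx n P Q → ℝ) :
    Tmap v w = ∑ kk, w kk • v kk := by
  simp [Tmap, LinearMap.sum_apply, LinearMap.smulRight_apply, LinearMap.proj_apply]

lemma Tmap_sub_norm_le (v v' : KIdx n P Q → Vec n × Vec n) (w : KIdx n P Q → ℝ) :
    ‖Tmap v w - Tmap v' w‖ ≤ (∑ kk, ‖v kk - v' kk‖) * ‖w‖ := by
  rw [Tmap_apply, Tmap_apply, ← Finset.sum_sub_distrib]
  calc ‖∑ kk : KIdx n P Q, (w kk • v kk - w kk • v' kk)‖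
      ≤ ∑ kk, ‖w kk • v kk - w kk • v' kk‖ := norm_sum_le _ _
    _ ≤ ∑ kk, ‖v kk - v' kk‖ * ‖w‖ := by
        refine Finset.sum_le_sum fun kk _ => ?_
        rw [← smul_sub, norm_smul]
        calc ‖w kk‖ * ‖v kk - v' kk‖ ≤ ‖w‖ * ‖v kk - v' kk‖ := by
              have := norm_le_pi_norm w kk
              exact mul_le_mul_of_nonneg_right this (norm_nonneg _)
          _ = ‖v kk - v' kk‖ * ‖w‖ := mul_comm _ _
    _ = (∑ kk, ‖v kk - v' kk‖) * ‖w‖ := by rw [Finset.sum_mul]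

end AuxStatement9
section Aux2
variable {n : ℕ} {P Q : Type*} [Fintype P] [Fintype Q]

/-- Which multiplier coordinates are allowed to be nonzero at the limit. -/
def goodIdx (D : Setting n P Q) (xb yb : Vec n) : KIdx n P Q → Prop :=
  Sum.elim
    (Sum.elim (fun _ => True) (fun q => q ∈ Q0 D xb))
    (Sum.elim (Sum.elim (fun i => i ∈ Eact D yb) (fun _ => (∑ i, yb i) = (n : ℝ) - D.s))
      (Sum.elim (fun i => xb i = 0) (fun i => yb i = 0)))

/-- The subspace of multiplier vectors supported on the good coordinates. -/
def W0sub (D : Setting n P Q) (xb yb : Vec n) : Submodule ℝ (KIdx n P Q → ℝ) where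
  carrier := {w | ∀ kk, ¬ goodIdx D xb yb kk → w kk = 0}
  add_mem' := fun ha hb kk hk => by simp [ha kk hk, hb kk hk]
  zero_mem' := fun kk hk => rfl
  smul_mem' := fun c w hw kk hk => by simp [hw kk hk]

/-- The family of vectors appearing in the rewritten KKT equation. -/
def vfam (D : Setting n P Q) (xb yb : Vec n) (a θ1 θ2 : Vec n) : KIdx n P Q → Vec n × Vec n :=
  Sum.elim
    (Sum.elim (fun p => ((grad (D.h p) a, 0) : Vec n × Vec n))
      (fun q => if q ∈ Q0 D xb then ((grad (D.g q) a, 0) : Vec n × Vec n) else 0))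
    (Sum.elim (Sum.elim (fun i => if i ∈ Eact D yb then -(ey i) else 0) (fun _ => eAll))
      (Sum.elim (fun i => if xb i = 0 then ex i + θ1 i • ey i else 0)
        (fun i => if yb i = 0 then ey i + θ2 i • ex i else 0)))

def theta1 (xb yb x y : Vec n) : Vec n := fun i => if i ∈ a01 xb yb then x i / y i else 0
def theta2 (xb yb x y : Vec n) : Vec n := fun i => if i ∈ a10 xb yb then y i / x i else 0

/-- The zero-extended multiplier vector of a KKT point, arranged for the limit. -/
def wvec (D : Setting n P Q) (xb yb x y : Vec n) (M : SMult n P Q) : KIdx n P Q → ℝ :=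
  Sum.elim
    (Sum.elim M.lam (fun q => if q ∈ Q0 D xb then M.mu1 q else 0))
    (Sum.elim (Sum.elim (fun i => if i ∈ Eact D yb then M.mu2 i else 0)
        (fun _ => if (∑ i, yb i) = (n : ℝ) - D.s then M.mu3 else 0))
      (Sum.elim (fun i => if xb i = 0 then (M.etaGe i - M.etaLe i) * y i else 0)
        (fun i => if yb i = 0 then M.nu i + (M.etaGe i - M.etaLe i) * x i else 0)))

lemma wvec_mem (D : Setting n P Q) (xb yb x y : Vec n) (M : SMult n P Q) :
    wvec D xb yb x y M ∈ W0sub D xb yb := by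
  intro kk hk
  rcases kk with (p | q) | (i | u) | i | i
  · exact absurd trivial hk
  · simp only [wvec, Sum.elim_inl, Sum.elim_inr, goodIdx] at *; rw [if_neg hk]
  · simp only [wvec, Sum.elim_inl, Sum.elim_inr, goodIdx] at *; rw [if_neg hk]
  · simp only [wvec, Sum.elim_inl, Sum.elim_inr, goodIdx] at *; rw [if_neg hk]
  · simp only [wvec, Sum.elim_inl, Sum.elim_inr, goodIdx] at *; rw [if_neg hk]
  · simp only [wvec, Sum.elim_inl, Sum.elim_inr, goodIdx] at *; rw [if_neg hk]

end Aux2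
section Aux3
variable {n : ℕ} {P Q : Type*} [Fintype P] [Fintype Q]

private lemma ite_neg_zero {α : Type*} [SubtractionMonoid α] (c : Prop) [Decidable c] (a : α) :
    (if c then -a else 0) = -(if c then a else 0) := by split <;> simp

lemma Tmap_vfam (D : Setting n P Q) (xb yb a θ1 θ2 : Vec n) (w : KIdx n P Q → ℝ) :
    Tmap (vfam D xb yb a θ1 θ2) w =
      (∑ p, w (iLam p) • ((grad (D.h p) a, 0) : Vec n × Vec n))
      + (∑ q ∈ Q0 D xb, w (iMu1 q) • ((grad (D.g q) a, 0) : Vec n × Vec n))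
      - (∑ i ∈ Eact D yb, w (iMu2 i) • ey i)
      + w iMu3 • eAll
      + (∑ i ∈ Finset.univ.filter (fun i => xb i = 0), w (iS1 i) • (ex i + θ1 i • ey i))
      + (∑ i ∈ Finset.univ.filter (fun i => yb i = 0), w (iS2 i) • (ey i + θ2 i • ex i)) := by
  rw [Tmap_apply, Fintype.sum_sum_type, Fintype.sum_sum_type, Fintype.sum_sum_type,
    Fintype.sum_sum_type, Fintype.sum_sum_type]
  simp only [vfam, Sum.elim_inl, Sum.elim_inr, smul_ite, smul_zero, smul_neg, Q0, Eact,
    Finset.sum_filter, Fintype.sum_unique, Finset.mem_filter, Finset.mem_univ, true_and,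
    ite_neg_zero, neg_smul, one_smul, Finset.sum_neg_distrib]
  abel

end Aux3
section Aux4
variable {n : ℕ} {P Q : Type*} [Fintype P] [Fintype Q]

lemma filter_x_eq (D : Setting n P Q) {xb yb : Vec n} (hfeas : feasR D xb yb) :
    Finset.univ.filter (fun i => xb i = 0) = a01 xb yb ∪ a00 xb yb := by
  ext i
  simp only [Finset.mem_filter, Finset.mem_univ, true_and, a01, a00, Finset.mem_union]
  constructor
  · intro hx
    rcases (hfeas.2.2.2.2 i).1.lt_or_eq with hy | hy
    · exact Or.inl ⟨hx, hy⟩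
    · exact Or.inr ⟨hx, hy.symm⟩
  · rintro (⟨hx, _⟩ | ⟨hx, _⟩) <;> exact hx

lemma filter_y_eq (D : Setting n P Q) {xb yb : Vec n} (hfeas : feasR D xb yb) :
    Finset.univ.filter (fun i => yb i = 0) = a10 xb yb ∪ a00 xb yb := by
  ext i
  simp only [Finset.mem_filter, Finset.mem_univ, true_and, a10, a00, Finset.mem_union]
  constructor
  · intro hy
    by_cases hx : xb i = 0
    · exact Or.inr ⟨hx, hy⟩
    · exact Or.inl ⟨hx, hy⟩
  · rintro (⟨_, hy⟩ | ⟨_, hy⟩) <;> exact hy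

lemma filter_x_ne (D : Setting n P Q) {xb yb : Vec n} (hfeas : feasR D xb yb) :
    Finset.univ.filter (fun i => ¬ xb i = 0) = a10 xb yb := by
  ext i
  simp only [Finset.mem_filter, Finset.mem_univ, true_and, a10]
  refine ⟨fun hx => ⟨hx, ?_⟩, fun h => h.1⟩
  have := hfeas.2.2.2.1 i
  rcases mul_eq_zero.mp this with h | h
  · exact absurd h hx
  · exact h

lemma filter_y_ne (D : Setting n P Q) {xb yb : Vec n} (hfeas : feasR D xb yb) :
    Finset.univ.filter (fun i => ¬ yb i = 0) = a01 xb yb := by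
  ext i
  simp only [Finset.mem_filter, Finset.mem_univ, true_and, a01]
  constructor
  · intro hy
    have hc := hfeas.2.2.2.1 i
    rcases mul_eq_zero.mp hc with h | h
    · exact ⟨h, (hfeas.2.2.2.2 i).1.lt_of_ne (Ne.symm hy)⟩
    · exact absurd h hy
  · rintro ⟨_, hy⟩; exact ne_of_gt hy

lemma disj_a01_a00 (xb yb : Vec n) : Disjoint (a01 xb yb) (a00 xb yb) := by
  rw [Finset.disjoint_left]
  intro i h1 h0
  simp only [a01, a00, Finset.mem_filter] at h1 h0
  exact absurd h0.2.2 (ne_of_gt h1.2.2)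

lemma disj_a10_a00 (xb yb : Vec n) : Disjoint (a10 xb yb) (a00 xb yb) := by
  rw [Finset.disjoint_left]
  intro i h1 h0
  simp only [a10, a00, Finset.mem_filter] at h1 h0
  exact absurd h0.2.1 h1.2.1

end Aux4
section Aux5
variable {n : ℕ} {P Q : Type*} [Fintype P] [Fintype Q]

lemma Tmap_inj (D : Setting n P Q) {xb yb : Vec n} (hfeas : feasR D xb yb)
    (hlicq : MPOC_LICQ D xb yb) {w : KIdx n P Q → ℝ} (hw : w ∈ W0sub D xb yb)
    (h0 : Tmap (vfam D xb yb xb 0 0) w = 0) : w = 0 := by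
  rw [Tmap_vfam] at h0
  simp only [Pi.zero_apply, zero_smul, add_zero] at h0
  have hx := filter_x_eq D hfeas
  have hy := filter_y_eq D hfeas
  rw [hx, hy] at h0
  have key := hlicq (fun p => w (iLam p)) (fun q => w (iMu1 q)) (fun i => -(w (iMu2 i)))
    (w iMu3) (fun i => w (iS1 i)) (fun i => w (iS2 i))
    (fun hne => hw iMu3 (by simpa [goodIdx] using hne)) ?_
  · funext kk
    rcases kk with (p | q) | (i | u) | i | i
    · exact key.1 p
    · by_cases hq : q ∈ Q0 D xb
      · exact key.2.1 q hq
      · exact hw _ (by simpa [goodIdx] using hq)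
    · by_cases hi : i ∈ Eact D yb
      · have := key.2.2.1 i hi
        simpa using this
      · exact hw _ (by simpa [goodIdx] using hi)
    · exact key.2.2.2.1
    · by_cases hi : i ∈ a01 xb yb ∪ a00 xb yb
      · exact key.2.2.2.2.1 i hi
      · refine hw _ ?_
        simp only [goodIdx, Sum.elim_inr, Sum.elim_inl]
        rw [← hx] at hi
        simpa using hi
    · by_cases hi : i ∈ a10 xb yb ∪ a00 xb yb
      · exact key.2.2.2.2.2 i hi
      · refine hw _ ?_
        simp only [goodIdx, Sum.elim_inr, Sum.elim_inl]
        rw [← hy] at hi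
        simpa using hi
  · rw [← h0]
    simp only [neg_smul, Finset.sum_neg_distrib]
    abel

end Aux5
section Aux6
variable {n : ℕ} {P Q : Type*} [Fintype P] [Fintype Q]

/-- If `y i ≠ 0` then `ν i = 0` and the σ₂ multiplier is σ₁·(x/y). -/
lemma sigma_rel_y {x y : Vec n} {M : SMult n P Q}
    (hnu : ∀ i ∉ Nact y, M.nu i = 0) {i : Fin n} (hy : y i ≠ 0) :
    M.nu i + (M.etaGe i - M.etaLe i) * x i
      = ((M.etaGe i - M.etaLe i) * y i) * (x i / y i) := by
  have h : M.nu i = 0 := hnu i (by simp [Nact, hy])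
  rw [h, zero_add]
  field_simp

/-- If `x i ≠ 0` and `t > 0` then σ₁ = σ₂·(y/x). -/
lemma sigma_rel_x {t : ℝ} (ht : 0 < t) {x y : Vec n} {M : SMult n P Q}
    (hge : ∀ i ∉ Hge t x y, M.etaGe i = 0) (hle : ∀ i ∉ Hle t x y, M.etaLe i = 0)
    (hnu : ∀ i ∉ Nact y, M.nu i = 0) {i : Fin n} (hx : x i ≠ 0) :
    (M.etaGe i - M.etaLe i) * y i
      = (M.nu i + (M.etaGe i - M.etaLe i) * x i) * (y i / x i) := by
  by_cases hy : y i = 0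
  · have h1 : M.etaGe i = 0 := by
      refine hge i ?_
      simp only [Hge, Finset.mem_filter, Finset.mem_univ, true_and]
      rw [hy, mul_zero]
      intro h; linarith
    have h2 : M.etaLe i = 0 := by
      refine hle i ?_
      simp only [Hle, Finset.mem_filter, Finset.mem_univ, true_and]
      rw [hy, mul_zero]
      exact (ne_of_lt ht)
    simp [hy, h1, h2]
  · have h : M.nu i = 0 := hnu i (by simp [Nact, hy])
    rw [h, zero_add]
    field_simp

/-- Sign lemma on σ₁, σ₂ at any KKT point of S(t): if σ₂ > 0 then σ₁ = 0. -/
lemma sigma_sign {D : Setting n P Q} {t : ℝ} (ht : 0 < t) {x y : Vec n} {M : SMult n P Q}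
    (hK : KKTAt D t x y M)
    (hge : ∀ i ∉ Hge t x y, M.etaGe i = 0) (hle : ∀ i ∉ Hle t x y, M.etaLe i = 0)
    (hnu : ∀ i ∉ Nact y, M.nu i = 0) (i : Fin n)
    (hpos : 0 < M.nu i + (M.etaGe i - M.etaLe i) * x i) :
    (M.etaGe i - M.etaLe i) * y i = 0 := by
  obtain ⟨hfeas, -, -, -, -, hsge, hsle, hsnu, -⟩ := hK
  have hy0 : 0 ≤ y i := (hfeas.2.2.2.2 i).1
  by_cases hGe : i ∈ Hge t x y
  · exfalso
    have hxy : x i * y i = -t := by simpa [Hge] using hGe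
    have hyne : y i ≠ 0 := by
      intro h; rw [h, mul_zero] at hxy; linarith
    have hypos : 0 < y i := hy0.lt_of_ne (Ne.symm hyne)
    have hxneg : x i < 0 := by nlinarith
    have hnu0 : M.nu i = 0 := hnu i (by simp [Nact, hyne])
    have hle0 : M.etaLe i = 0 := by
      refine hle i ?_
      simp only [Hle, Finset.mem_filter, Finset.mem_univ, true_and]
      rw [hxy]; intro h; nlinarith
    have hge0 : 0 ≤ M.etaGe i := hsge i hGe
    rw [hnu0, hle0] at hpos
    nlinarith
  · by_cases hLe : i ∈ Hle t x y
    · exfalso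
      have hxy : x i * y i = t := by simpa [Hle] using hLe
      have hyne : y i ≠ 0 := by
        intro h; rw [h, mul_zero] at hxy; exact absurd hxy (ne_of_lt ht)
      have hypos : 0 < y i := hy0.lt_of_ne (Ne.symm hyne)
      have hxpos : 0 < x i := by nlinarith
      have hnu0 : M.nu i = 0 := hnu i (by simp [Nact, hyne])
      have hge0 : M.etaGe i = 0 := by
        refine hge i ?_
        simp only [Hge, Finset.mem_filter, Finset.mem_univ, true_and]
        rw [hxy]; intro h; nlinarith
      have hle0 : 0 ≤ M.etaLe i := hsle i hLe
      rw [hnu0, hge0] at hpos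
      nlinarith
    · rw [hge i hGe, hle i hLe]
      ring

end Aux6
section Aux7
variable {n : ℕ} {P Q : Type*} [Fintype P] [Fintype Q]

lemma hvec_decomp (x y : Vec n) (i : Fin n) : hvec x y i = y i • ex i + x i • ey i := by
  unfold hvec ex ey
  refine Prod.ext ?_ ?_ <;> funext j <;> by_cases hj : j = i <;>
    simp [Pi.single_apply, hj, mul_comm]

lemma rewrite_KKT (D : Setting n P Q) {t : ℝ} (ht : 0 < t) {x y xb yb : Vec n} {M : SMult n P Q}
    (hK : KKTAt D t x y M)
    (hz1 : ∀ q ∉ Q0 D x, M.mu1 q = 0) (hz2 : ∀ i ∉ Eact D y, M.mu2 i = 0)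
    (hz3 : ∀ i ∉ Hge t x y, M.etaGe i = 0) (hz4 : ∀ i ∉ Hle t x y, M.etaLe i = 0)
    (hz5 : ∀ i ∉ Nact y, M.nu i = 0)
    (hfeas : feasR D xb yb)
    (e1 : ∀ q ∉ Q0 D xb, M.mu1 q = 0)
    (e2 : ∀ i ∉ Eact D yb, M.mu2 i = 0)
    (e3 : (∑ i, yb i) ≠ (n : ℝ) - D.s → M.mu3 = 0)
    (e4 : ∀ i ∈ a10 xb yb, x i ≠ 0)
    (e5 : ∀ i ∈ a01 xb yb, y i ≠ 0) :
    Tmap (vfam D xb yb x (theta1 xb yb x y) (theta2 xb yb x y)) (wvec D xb yb x y M)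
      = ((grad D.f x, D.c) : Vec n × Vec n) := by
  set s1 : Fin n → ℝ := fun i => (M.etaGe i - M.etaLe i) * y i with hs1
  set s2 : Fin n → ℝ := fun i => M.nu i + (M.etaGe i - M.etaLe i) * x i with hs2
  rw [Tmap_vfam]
  -- reduce the wvec coefficients on each active set
  have hA : (∑ p, wvec D xb yb x y M (iLam p) • ((grad (D.h p) x, 0) : Vec n × Vec n))
      = ∑ p, M.lam p • ((grad (D.h p) x, 0) : Vec n × Vec n) := rfl
  have hB : (∑ q ∈ Q0 D xb, wvec D xb yb x y M (iMu1 q) • ((grad (D.g q) x, 0) : Vec n × Vec n))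
      = ∑ q ∈ Q0 D x, M.mu1 q • ((grad (D.g q) x, 0) : Vec n × Vec n) := by
    have l1 : (∑ q ∈ Q0 D xb, wvec D xb yb x y M (iMu1 q) • ((grad (D.g q) x, 0) : Vec n × Vec n))
        = ∑ q ∈ Q0 D xb, M.mu1 q • ((grad (D.g q) x, 0) : Vec n × Vec n) :=
      Finset.sum_congr rfl fun q hq => by simp [wvec, if_pos hq]
    rw [l1]
    rw [Finset.sum_subset (Finset.subset_univ (Q0 D xb)) fun q _ hq => by
      rw [e1 q hq, zero_smul]]
    rw [Finset.sum_subset (Finset.subset_univ (Q0 D x)) fun q _ hq => by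
      rw [hz1 q hq, zero_smul]]
  have hC : (∑ i ∈ Eact D yb, wvec D xb yb x y M (iMu2 i) • ey i)
      = ∑ i ∈ Eact D y, M.mu2 i • ey i := by
    have l1 : (∑ i ∈ Eact D yb, wvec D xb yb x y M (iMu2 i) • ey i)
        = ∑ i ∈ Eact D yb, M.mu2 i • ey i :=
      Finset.sum_congr rfl fun i hi => by simp [wvec, if_pos hi]
    rw [l1]
    rw [Finset.sum_subset (Finset.subset_univ (Eact D yb)) fun i _ hi => by
      rw [e2 i hi, zero_smul]]
    rw [Finset.sum_subset (Finset.subset_univ (Eact D y)) fun i _ hi => by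
      rw [hz2 i hi, zero_smul]]
  have hD : wvec D xb yb x y M iMu3 = M.mu3 := by
    by_cases hs : (∑ i, yb i) = (n : ℝ) - D.s
    · simp [wvec, if_pos hs]
    · simp [wvec, if_neg hs, (e3 hs).symm]
  have hS1 : (∑ i ∈ Finset.univ.filter (fun i => xb i = 0),
        wvec D xb yb x y M (iS1 i) • (ex i + theta1 xb yb x y i • ey i))
      = (∑ i ∈ Finset.univ.filter (fun i => xb i = 0), s1 i • ex i)
        + ∑ i ∈ a01 xb yb, s2 i • ey i := by
    have l1 : (∑ i ∈ Finset.univ.filter (fun i => xb i = 0),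
          wvec D xb yb x y M (iS1 i) • (ex i + theta1 xb yb x y i • ey i))
        = ∑ i ∈ Finset.univ.filter (fun i => xb i = 0),
            (s1 i • ex i + s1 i • theta1 xb yb x y i • ey i) := by
      refine Finset.sum_congr rfl fun i hi => ?_
      rw [Finset.mem_filter] at hi
      simp [wvec, if_pos hi.2, smul_add, hs1]
    rw [l1, Finset.sum_add_distrib]
    congr 1
    have hsub : a01 xb yb ⊆ Finset.univ.filter (fun i => xb i = 0) := by
      intro i hi
      simp only [a01, Finset.mem_filter] at hi ⊢
      exact ⟨Finset.mem_univ i, hi.2.1⟩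
    rw [← Finset.sum_subset hsub fun i _ hi => by
      simp [theta1, if_neg hi]]
    refine Finset.sum_congr rfl fun i hi => ?_
    have hrel := sigma_rel_y (M := M) (x := x) hz5 (e5 i hi)
    simp only [theta1, if_pos hi, smul_smul, hs1, hs2]
    rw [hrel]
  have hS2 : (∑ i ∈ Finset.univ.filter (fun i => yb i = 0),
        wvec D xb yb x y M (iS2 i) • (ey i + theta2 xb yb x y i • ex i))
      = (∑ i ∈ Finset.univ.filter (fun i => yb i = 0), s2 i • ey i)
        + ∑ i ∈ a10 xb yb, s1 i • ex i := by
    have l1 : (∑ i ∈ Finset.univ.filter (fun i => yb i = 0),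
          wvec D xb yb x y M (iS2 i) • (ey i + theta2 xb yb x y i • ex i))
        = ∑ i ∈ Finset.univ.filter (fun i => yb i = 0),
            (s2 i • ey i + s2 i • theta2 xb yb x y i • ex i) := by
      refine Finset.sum_congr rfl fun i hi => ?_
      rw [Finset.mem_filter] at hi
      simp [wvec, if_pos hi.2, smul_add, hs2]
    rw [l1, Finset.sum_add_distrib]
    congr 1
    have hsub : a10 xb yb ⊆ Finset.univ.filter (fun i => yb i = 0) := by
      intro i hi
      simp only [a10, Finset.mem_filter] at hi ⊢
      exact ⟨Finset.mem_univ i, hi.2.2⟩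
    rw [← Finset.sum_subset hsub fun i _ hi => by
      simp [theta2, if_neg hi]]
    refine Finset.sum_congr rfl fun i hi => ?_
    have hrel := sigma_rel_x (M := M) ht hz3 hz4 hz5 (e4 i hi)
    simp only [theta2, if_pos hi, smul_smul, hs1, hs2]
    rw [hrel]
  rw [hA, hB, hC, hD, hS1, hS2]
  -- now use the KKT equation
  have hEq := hK.2.2.2.2.2.2.2.2
  rw [KKTEq] at hEq
  rw [hEq]
  -- turn the H/N sums into full sums of s1, s2
  have hHge : (∑ i ∈ Hge t x y, M.etaGe i • hvec x y i) = ∑ i, M.etaGe i • hvec x y i :=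
    Finset.sum_subset (Finset.subset_univ _) fun i _ hi => by rw [hz3 i hi, zero_smul]
  have hHle : (∑ i ∈ Hle t x y, M.etaLe i • hvec x y i) = ∑ i, M.etaLe i • hvec x y i :=
    Finset.sum_subset (Finset.subset_univ _) fun i _ hi => by rw [hz4 i hi, zero_smul]
  have hN : (∑ i ∈ Nact y, M.nu i • ey i) = ∑ i, M.nu i • ey i :=
    Finset.sum_subset (Finset.subset_univ _) fun i _ hi => by rw [hz5 i hi, zero_smul]
  rw [hHge, hHle, hN]
  have hcomb : (∑ i, M.etaGe i • hvec x y i) - (∑ i, M.etaLe i • hvec x y i)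
      + (∑ i, M.nu i • ey i) = (∑ i, s1 i • ex i) + ∑ i, s2 i • ey i := by
    rw [← Finset.sum_sub_distrib, ← Finset.sum_add_distrib, ← Finset.sum_add_distrib]
    refine Finset.sum_congr rfl fun i _ => ?_
    rw [hvec_decomp, hs1, hs2]
    simp only
    module
  have hsplit1 : (∑ i, s1 i • ex i)
      = (∑ i ∈ Finset.univ.filter (fun i => xb i = 0), s1 i • ex i)
        + ∑ i ∈ a10 xb yb, s1 i • ex i := by
    rw [← filter_x_ne D hfeas, Finset.sum_filter_add_sum_filter_not]
  have hsplit2 : (∑ i, s2 i • ey i)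
      = (∑ i ∈ Finset.univ.filter (fun i => yb i = 0), s2 i • ey i)
        + ∑ i ∈ a01 xb yb, s2 i • ey i := by
    rw [← filter_y_ne D hfeas, Finset.sum_filter_add_sum_filter_not]
  have hfinal : ((∑ i ∈ Finset.univ.filter (fun i => xb i = 0), s1 i • ex i)
        + ∑ i ∈ a01 xb yb, s2 i • ey i)
      + ((∑ i ∈ Finset.univ.filter (fun i => yb i = 0), s2 i • ey i)
        + ∑ i ∈ a10 xb yb, s1 i • ex i)
      = (∑ i, M.etaGe i • hvec x y i) - (∑ i, M.etaLe i • hvec x y i)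
        + (∑ i, M.nu i • ey i) := by
    rw [hcomb, hsplit1, hsplit2]
    abel
  linear_combination (norm := abel) hfinal

end Aux7
section Aux8
variable {n : ℕ} {P Q : Type*} [Fintype P] [Fintype Q]

lemma grad_continuous {f : Vec n → ℝ} (hf : ContDiff ℝ 2 f) : Continuous (grad f) := by
  have h1 : Continuous (fderiv ℝ f) := hf.continuous_fderiv (by norm_num)
  exact continuous_pi fun i => h1.clm_apply continuous_const

end Aux8

set_option maxHeartbeats 1600000 in
/-- Theorem 2 + Remark 1: convergence of the multipliers of KKT
points of S(t_k) (extended by zero off the active index sets) towards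
T-stationarity multipliers of R at the limit point. -/
theorem statement9 {n : ℕ} {P Q : Type*} [Fintype P] [Fintype Q]
    (D : Setting n P Q) (t : ℕ → ℝ) (htpos : ∀ k, 0 < t k)
    (ht0 : Filter.Tendsto t Filter.atTop (nhds 0))
    (X Y : ℕ → Vec n) (Mk : ℕ → SMult n P Q)
    (hK : ∀ k, KKTAt D (t k) (X k) (Y k) (Mk k))
    (hzero : ∀ k,
      (∀ q ∉ Q0 D (X k), (Mk k).mu1 q = 0) ∧
      (∀ i ∉ Eact D (Y k), (Mk k).mu2 i = 0) ∧
      (∀ i ∉ Hge (t k) (X k) (Y k), (Mk k).etaGe i = 0) ∧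
      (∀ i ∉ Hle (t k) (X k) (Y k), (Mk k).etaLe i = 0) ∧
      (∀ i ∉ Nact (Y k), (Mk k).nu i = 0))
    (xb yb : Vec n)
    (hconv : Filter.Tendsto (fun k => ((X k, Y k) : Vec n × Vec n))
      Filter.atTop (nhds (xb, yb)))
    (hfeas : feasR D xb yb) (hlicq : MPOC_LICQ D xb yb) :
    ∃ Mb : TMult n P Q, TStatAt D xb yb Mb ∧
      (∀ p, Filter.Tendsto (fun k => (Mk k).lam p) Filter.atTop (nhds (Mb.lam p))) ∧
      (∀ q, Filter.Tendsto (fun k => (Mk k).mu1 q) Filter.atTop (nhds (Mb.mu1 q))) ∧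
      (∀ i, Filter.Tendsto (fun k => (Mk k).mu2 i) Filter.atTop (nhds (Mb.mu2 i))) ∧
      Filter.Tendsto (fun k => (Mk k).mu3) Filter.atTop (nhds Mb.mu3) ∧
      (∀ i ∈ a01 xb yb,
        Filter.Tendsto (fun k => ((Mk k).etaGe i - (Mk k).etaLe i) * Y k i)
          Filter.atTop (nhds (Mb.sig1 i))) ∧
      (∀ i ∈ a10 xb yb,
        Filter.Tendsto (fun k => (Mk k).nu i + ((Mk k).etaGe i - (Mk k).etaLe i) * X k i)
          Filter.atTop (nhds (Mb.sig2 i))) ∧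
      (∀ i ∈ a00 xb yb,
        Filter.Tendsto (fun k => ((Mk k).etaGe i - (Mk k).etaLe i) * Y k i)
          Filter.atTop (nhds (Mb.rho1 i)) ∧
        Filter.Tendsto (fun k => (Mk k).nu i + ((Mk k).etaGe i - (Mk k).etaLe i) * X k i)
          Filter.atTop (nhds (Mb.rho2 i))) := by
  classical
  -- componentwise convergence
  have hX : Tendsto X atTop (𝓝 xb) := (continuous_fst.tendsto _).comp hconv
  have hY : Tendsto Y atTop (𝓝 yb) := (continuous_snd.tendsto _).comp hconv
  have hXi : ∀ i, Tendsto (fun k => X k i) atTop (𝓝 (xb i)) :=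
    fun i => ((continuous_apply i).tendsto _).comp hX
  have hYi : ∀ i, Tendsto (fun k => Y k i) atTop (𝓝 (yb i)) :=
    fun i => ((continuous_apply i).tendsto _).comp hY
  set vbar : KIdx n P Q → Vec n × Vec n := vfam D xb yb xb 0 0 with hvbar
  set vk : ℕ → KIdx n P Q → Vec n × Vec n :=
    fun k => vfam D xb yb (X k) (theta1 xb yb (X k) (Y k)) (theta2 xb yb (X k) (Y k)) with hvk
  set wk : ℕ → KIdx n P Q → ℝ := fun k => wvec D xb yb (X k) (Y k) (Mk k) with hwk
  set cvk : ℕ → Vec n × Vec n := fun k => (grad D.f (X k), D.c) with hcvk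
  set cbar : Vec n × Vec n := (grad D.f xb, D.c) with hcbar
  have hcv : Tendsto cvk atTop (𝓝 cbar) :=
    (((grad_continuous D.hf).tendsto _).comp hX).prodMk_nhds tendsto_const_nhds
  -- eventual facts
  have e1ev : ∀ᶠ k in atTop, ∀ q, q ∉ Q0 D xb → (Mk k).mu1 q = 0 := by
    rw [Filter.eventually_all]
    intro q
    by_cases hq : q ∈ Q0 D xb
    · exact Eventually.of_forall fun k hq' => absurd hq hq'
    · have hgne : D.g q xb ≠ 0 := by simpa [Q0, Finset.mem_filter] using hq
      have hg : Tendsto (fun k => D.g q (X k)) atTop (𝓝 (D.g q xb)) :=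
        ((D.hg q).continuous.tendsto _).comp hX
      filter_upwards [hg.eventually_ne hgne] with k hk _
      exact (hzero k).1 q (by simpa [Q0, Finset.mem_filter] using hk)
  have e2ev : ∀ᶠ k in atTop, ∀ i, i ∉ Eact D yb → (Mk k).mu2 i = 0 := by
    rw [Filter.eventually_all]
    intro i
    by_cases hi : i ∈ Eact D yb
    · exact Eventually.of_forall fun k hi' => absurd hi hi'
    · have hne : yb i ≠ 1 + D.ε := by simpa [Eact, Finset.mem_filter] using hi
      filter_upwards [(hYi i).eventually_ne hne] with k hk _
      exact (hzero k).2.1 i (by simpa [Eact, Finset.mem_filter] using hk)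
  have e3ev : ∀ᶠ k in atTop, ((∑ i, yb i) ≠ (n : ℝ) - D.s → (Mk k).mu3 = 0) := by
    by_cases hs : (∑ i, yb i) = (n : ℝ) - D.s
    · exact Eventually.of_forall fun k hs' => absurd hs hs'
    · have hsum : Tendsto (fun k => ∑ i, Y k i) atTop (𝓝 (∑ i, yb i)) :=
        tendsto_finset_sum _ fun i _ => hYi i
      filter_upwards [hsum.eventually_ne hs] with k hk _
      have hcomp := (hK k).2.2.2.2.1
      rcases mul_eq_zero.mp hcomp with h | h
      · exact h
      · exact absurd (sub_eq_zero.mp h) hk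
  have e4ev : ∀ᶠ k in atTop, ∀ i, i ∈ a10 xb yb → X k i ≠ 0 := by
    rw [Filter.eventually_all]
    intro i
    by_cases hi : i ∈ a10 xb yb
    · have hne : xb i ≠ 0 := by
        simp only [a10, Finset.mem_filter] at hi; exact hi.2.1
      filter_upwards [(hXi i).eventually_ne hne] with k hk _
      exact hk
    · exact Eventually.of_forall fun k hi' => absurd hi' hi
  have e5ev : ∀ᶠ k in atTop, ∀ i, i ∈ a01 xb yb → Y k i ≠ 0 := by
    rw [Filter.eventually_all]
    intro i
    by_cases hi : i ∈ a01 xb yb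
    · have hne : yb i ≠ 0 := by
        simp only [a01, Finset.mem_filter] at hi; exact (ne_of_gt hi.2.2)
      filter_upwards [(hYi i).eventually_ne hne] with k hk _
      exact hk
    · exact Eventually.of_forall fun k hi' => absurd hi' hi
  -- the rewritten KKT equation, eventually
  have hEqev : ∀ᶠ k in atTop, Tmap (vk k) (wk k) = cvk k := by
    filter_upwards [e1ev, e2ev, e3ev, e4ev, e5ev] with k h1 h2 h3 h4 h5
    exact rewrite_KKT D (htpos k) (hK k) (hzero k).1 (hzero k).2.1 (hzero k).2.2.1
      (hzero k).2.2.2.1 (hzero k).2.2.2.2 hfeas h1 h2 h3 h4 h5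
  -- convergence of the vector family
  have hth1 : ∀ i, Tendsto (fun k => theta1 xb yb (X k) (Y k) i) atTop (𝓝 0) := by
    intro i
    by_cases hi : i ∈ a01 xb yb
    · have hx0 : xb i = 0 := by simp only [a01, Finset.mem_filter] at hi; exact hi.2.1
      have hyne : yb i ≠ 0 := by
        simp only [a01, Finset.mem_filter] at hi; exact (ne_of_gt hi.2.2)
      have := (hXi i).div (hYi i) hyne
      rw [hx0, zero_div] at this
      refine this.congr fun k => ?_
      simp [theta1, if_pos hi]
    · simpa [theta1, if_neg hi] using tendsto_const_nhds (α := ℝ) (f := atTop (α := ℕ))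
  have hth2 : ∀ i, Tendsto (fun k => theta2 xb yb (X k) (Y k) i) atTop (𝓝 0) := by
    intro i
    by_cases hi : i ∈ a10 xb yb
    · have hy0 : yb i = 0 := by simp only [a10, Finset.mem_filter] at hi; exact hi.2.2
      have hxne : xb i ≠ 0 := by simp only [a10, Finset.mem_filter] at hi; exact hi.2.1
      have := (hYi i).div (hXi i) hxne
      rw [hy0, zero_div] at this
      refine this.congr fun k => ?_
      simp [theta2, if_pos hi]
    · simpa [theta2, if_neg hi] using tendsto_const_nhds (α := ℝ) (f := atTop (α := ℕ))
  have hvkk : ∀ kk, Tendsto (fun k => vk k kk) atTop (𝓝 (vbar kk)) := by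
    intro kk
    rcases kk with (p | q) | (i | u) | i | i
    · simp only [hvk, hvbar, vfam, Sum.elim_inl]
      exact ((((grad_continuous (D.hh p)).tendsto _).comp hX).prodMk_nhds tendsto_const_nhds)
    · simp only [hvk, hvbar, vfam, Sum.elim_inl, Sum.elim_inr]
      by_cases hq : q ∈ Q0 D xb
      · simp only [if_pos hq]
        exact ((((grad_continuous (D.hg q)).tendsto _).comp hX).prodMk_nhds tendsto_const_nhds)
      · simp only [if_neg hq]; exact tendsto_const_nhds
    · exact tendsto_const_nhds
    · exact tendsto_const_nhds
    · simp only [hvk, hvbar, vfam, Sum.elim_inr, Sum.elim_inl]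
      by_cases hx : xb i = 0
      · simp only [if_pos hx, Pi.zero_apply, zero_smul, add_zero]
        have := ((hth1 i).smul_const (ey i)).const_add (ex i)
        rw [zero_smul, add_zero] at this
        exact this
      · simp only [if_neg hx]; exact tendsto_const_nhds
    · simp only [hvk, hvbar, vfam, Sum.elim_inr, Sum.elim_inl]
      by_cases hy : yb i = 0
      · simp only [if_pos hy, Pi.zero_apply, zero_smul, add_zero]
        have := ((hth2 i).smul_const (ex i)).const_add (ey i)
        rw [zero_smul, add_zero] at this
        exact this
      · simp only [if_neg hy]; exact tendsto_const_nhds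
  have hS : Tendsto (fun k => ∑ kk, ‖vk k kk - vbar kk‖) atTop (𝓝 0) := by
    have h := tendsto_finset_sum (Finset.univ : Finset (KIdx n P Q))
      (fun kk _ => tendsto_iff_norm_sub_tendsto_zero.mp (hvkk kk))
    simpa using h
  -- linear-algebraic setup
  have hwmem : ∀ k, wk k ∈ W0sub D xb yb := fun k => wvec_mem D xb yb (X k) (Y k) (Mk k)
  let T0 : W0sub D xb yb →ₗ[ℝ] (Vec n × Vec n) := (Tmap vbar).comp (W0sub D xb yb).subtype
  have hker : LinearMap.ker T0 = ⊥ := by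
    rw [LinearMap.ker_eq_bot']
    intro m hm
    exact Subtype.ext (Tmap_inj D hfeas hlicq m.2 hm)
  obtain ⟨L0, hL0⟩ := LinearMap.exists_leftInverse_of_injective T0 hker
  let L0' : (Vec n × Vec n) →L[ℝ] W0sub D xb yb := LinearMap.toContinuousLinearMap L0
  have hL0inv : ∀ m : W0sub D xb yb, L0' (Tmap vbar (m : KIdx n P Q → ℝ)) = m := by
    intro m
    have h := congrArg (fun φ : W0sub D xb yb →ₗ[ℝ] W0sub D xb yb => φ m) hL0
    simpa [L0', T0] using h
  let u : ℕ → W0sub D xb yb := fun k => ⟨wk k, hwmem k⟩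
  have hnormcoe : ∀ m : W0sub D xb yb, ‖(m : KIdx n P Q → ℝ)‖ = ‖m‖ := fun m => rfl
  set S : ℕ → ℝ := fun k => ∑ kk, ‖vk k kk - vbar kk‖ with hSdef
  have hSnonneg : ∀ k, 0 ≤ S k := fun k => Finset.sum_nonneg fun kk _ => norm_nonneg _
  have hdknorm : ∀ k, ‖Tmap vbar (wk k) - Tmap (vk k) (wk k)‖ ≤ S k * ‖u k‖ := by
    intro k
    have h := Tmap_sub_norm_le vbar (vk k) (wk k)
    have h2 : (∑ kk, ‖vbar kk - vk k kk‖) = S k := by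
      refine Finset.sum_congr rfl fun kk _ => norm_sub_rev _ _
    rw [h2] at h
    exact h
  have hukey : ∀ᶠ k in atTop, u k - L0' (cvk k)
      = L0' (Tmap vbar (wk k) - Tmap (vk k) (wk k)) := by
    filter_upwards [hEqev] with k hk
    have h1 : L0' (Tmap vbar (wk k)) = u k := hL0inv (u k)
    calc u k - L0' (cvk k) = L0' (Tmap vbar (wk k)) - L0' (cvk k) := by rw [h1]
      _ = L0' (Tmap vbar (wk k) - cvk k) := (map_sub L0' _ _).symm
      _ = _ := by rw [← hk]
  have hub : ∀ᶠ k in atTop, ‖u k - L0' (cvk k)‖ ≤ ‖L0'‖ * S k * ‖u k‖ := by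
    filter_upwards [hukey] with k hk
    rw [hk]
    calc ‖L0' (Tmap vbar (wk k) - Tmap (vk k) (wk k))‖
        ≤ ‖L0'‖ * ‖Tmap vbar (wk k) - Tmap (vk k) (wk k)‖ := L0'.le_opNorm _
      _ ≤ ‖L0'‖ * (S k * ‖u k‖) :=
          mul_le_mul_of_nonneg_left (hdknorm k) L0'.opNorm_nonneg
      _ = ‖L0'‖ * S k * ‖u k‖ := by ring
  have hCS : Tendsto (fun k => ‖L0'‖ * S k) atTop (𝓝 0) := by
    have h := hS.const_mul ‖L0'‖
    rwa [mul_zero] at h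
  have hCS2 : ∀ᶠ k in atTop, ‖L0'‖ * S k ≤ 1/2 :=
    hCS.eventually (eventually_le_nhds (by norm_num))
  have hBc : Tendsto (fun k => ‖L0' (cvk k)‖) atTop (𝓝 ‖L0' cbar‖) :=
    ((L0'.continuous.tendsto _).comp hcv).norm
  have hBev : ∀ᶠ k in atTop, ‖L0' (cvk k)‖ ≤ ‖L0' cbar‖ + 1 :=
    hBc.eventually (eventually_le_nhds (lt_add_one _))
  set B : ℝ := ‖L0' cbar‖ + 1 with hBdef
  have hBpos : 0 < B := by positivity
  have hbound : ∀ᶠ k in atTop, ‖u k‖ ≤ 2 * B := by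
    filter_upwards [hub, hCS2, hBev] with k h1 h2 h3
    have h4 : ‖u k‖ ≤ ‖L0' (cvk k)‖ + ‖u k - L0' (cvk k)‖ := by
      calc ‖u k‖ = ‖L0' (cvk k) + (u k - L0' (cvk k))‖ := by
            congr 1; abel
        _ ≤ _ := norm_add_le _ _
    have h5 : ‖u k - L0' (cvk k)‖ ≤ (1/2) * ‖u k‖ := by
      refine h1.trans ?_
      exact mul_le_mul_of_nonneg_right h2 (norm_nonneg _)
    linarith [norm_nonneg (u k)]
  have hdiff0 : Tendsto (fun k => u k - L0' (cvk k)) atTop (𝓝 0) := by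
    rw [tendsto_zero_iff_norm_tendsto_zero]
    refine squeeze_zero' (g := fun k => ‖L0'‖ * S k * (2 * B))
      (Eventually.of_forall fun k => norm_nonneg _) ?_ ?_
    · filter_upwards [hub, hbound, hCS2] with k h1 h2 _
      refine h1.trans ?_
      have hnn : 0 ≤ ‖L0'‖ * S k := mul_nonneg L0'.opNorm_nonneg (hSnonneg k)
      exact mul_le_mul_of_nonneg_left h2 hnn
    · have h := (hCS.mul_const (2 * B))
      rwa [zero_mul] at h
  have huconv : Tendsto u atTop (𝓝 (L0' cbar)) := by
    have h := hdiff0.add ((L0'.continuous.tendsto _).comp hcv)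
    rw [zero_add] at h
    refine h.congr fun k => ?_
    exact sub_add_cancel _ _
  set wbar : KIdx n P Q → ℝ := ((L0' cbar : W0sub D xb yb) : KIdx n P Q → ℝ) with hwbardef
  have hwconv : Tendsto wk atTop (𝓝 wbar) := (continuous_subtype_val.tendsto _).comp huconv
  have hwkk : ∀ kk, Tendsto (fun k => wk k kk) atTop (𝓝 (wbar kk)) :=
    fun kk => ((continuous_apply kk).tendsto _).comp hwconv
  have hwbar0 : ∀ kk, ¬ goodIdx D xb yb kk → wbar kk = 0 := (L0' cbar).2
  have hTbar : Tmap vbar wbar = cbar := by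
    have h1 : Tendsto (fun k => Tmap vbar (wk k)) atTop (𝓝 (Tmap vbar wbar)) :=
      (((Tmap vbar).continuous_of_finiteDimensional).tendsto _).comp hwconv
    have h2 : Tendsto (fun k => Tmap vbar (wk k)) atTop (𝓝 cbar) := by
      have hdz : Tendsto (fun k => Tmap vbar (wk k) - Tmap (vk k) (wk k)) atTop (𝓝 0) := by
        rw [tendsto_zero_iff_norm_tendsto_zero]
        refine squeeze_zero' (g := fun k => S k * (2 * B))
          (Eventually.of_forall fun k => norm_nonneg _) ?_ ?_
        · filter_upwards [hbound] with k h2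
          exact (hdknorm k).trans (mul_le_mul_of_nonneg_left h2 (hSnonneg k))
        · have h := hS.mul_const (2 * B)
          rwa [zero_mul] at h
      have h3 := hdz.add hcv
      rw [zero_add] at h3
      refine Tendsto.congr' ?_ h3
      filter_upwards [hEqev] with k hk
      rw [← hk]
      abel
    exact tendsto_nhds_unique h1 h2
  -- componentwise limits of the multipliers
  have hlamT : ∀ p, Tendsto (fun k => (Mk k).lam p) atTop (𝓝 (wbar (iLam p))) :=
    fun p => hwkk (iLam p)
  have hmu1T : ∀ q, Tendsto (fun k => (Mk k).mu1 q) atTop (𝓝 (wbar (iMu1 q))) := by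
    intro q
    by_cases hq : q ∈ Q0 D xb
    · refine (hwkk (iMu1 q)).congr fun k => ?_
      simp [hwk, wvec, if_pos hq]
    · have hz : wbar (iMu1 q) = 0 := hwbar0 _ (by simpa [goodIdx] using hq)
      rw [hz]
      refine Tendsto.congr' ?_ tendsto_const_nhds
      filter_upwards [e1ev] with k hk
      exact (hk q hq).symm
  have hmu2T : ∀ i, Tendsto (fun k => (Mk k).mu2 i) atTop (𝓝 (wbar (iMu2 i))) := by
    intro i
    by_cases hi : i ∈ Eact D yb
    · refine (hwkk (iMu2 i)).congr fun k => ?_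
      simp [hwk, wvec, if_pos hi]
    · have hz : wbar (iMu2 i) = 0 := hwbar0 _ (by simpa [goodIdx] using hi)
      rw [hz]
      refine Tendsto.congr' ?_ tendsto_const_nhds
      filter_upwards [e2ev] with k hk
      exact (hk i hi).symm
  have hmu3T : Tendsto (fun k => (Mk k).mu3) atTop (𝓝 (wbar iMu3)) := by
    by_cases hs : (∑ i, yb i) = (n : ℝ) - D.s
    · refine (hwkk iMu3).congr fun k => ?_
      simp [hwk, wvec, if_pos hs]
    · have hz : wbar iMu3 = 0 := hwbar0 _ (by simpa [goodIdx] using hs)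
      rw [hz]
      refine Tendsto.congr' ?_ tendsto_const_nhds
      filter_upwards [e3ev] with k hk
      exact (hk hs).symm
  have hs1T : ∀ i, xb i = 0 →
      Tendsto (fun k => ((Mk k).etaGe i - (Mk k).etaLe i) * Y k i) atTop (𝓝 (wbar (iS1 i))) := by
    intro i hx
    refine (hwkk (iS1 i)).congr fun k => ?_
    simp [hwk, wvec, if_pos hx]
  have hs2T : ∀ i, yb i = 0 →
      Tendsto (fun k => (Mk k).nu i + ((Mk k).etaGe i - (Mk k).etaLe i) * X k i) atTop
        (𝓝 (wbar (iS2 i))) := by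
    intro i hy
    refine (hwkk (iS2 i)).congr fun k => ?_
    simp [hwk, wvec, if_pos hy]
  refine ⟨⟨fun p => wbar (iLam p), fun q => wbar (iMu1 q), fun i => wbar (iMu2 i), wbar iMu3,
    fun i => wbar (iS1 i), fun i => wbar (iS2 i), fun i => wbar (iS1 i), fun i => wbar (iS2 i)⟩,
    ⟨hfeas, ?_, ?_, ?_, ?_, ?_, ?_⟩, fun p => hlamT p, fun q => hmu1T q, fun i => hmu2T i,
    hmu3T, ?_, ?_, ?_⟩
  · -- 0 ≤ mu1 on Q0
    intro q _
    refine ge_of_tendsto' (hmu1T q) fun k => ?_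
    by_cases hk : q ∈ Q0 D (X k)
    · exact (hK k).2.1 q hk
    · rw [(hzero k).1 q hk]
  · -- 0 ≤ mu2 on Eact
    intro i _
    refine ge_of_tendsto' (hmu2T i) fun k => ?_
    by_cases hk : i ∈ Eact D (Y k)
    · exact (hK k).2.2.1 i hk
    · rw [(hzero k).2.1 i hk]
  · -- 0 ≤ mu3
    exact ge_of_tendsto' hmu3T fun k => (hK k).2.2.2.1
  · -- complementarity
    by_cases hs : (∑ i, yb i) = (n : ℝ) - D.s
    · rw [show (∑ i, yb i) - ((n : ℝ) - D.s) = 0 by rw [hs]; ring, mul_zero]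
    · rw [show wbar (iMu3 (n := n) (P := P) (Q := Q)) = 0 from
        hwbar0 _ (by simpa [goodIdx] using hs), zero_mul]
  · -- rho1 = 0 or rho2 ≤ 0 on a00
    intro i hi
    have hx : xb i = 0 := by simp only [a00, Finset.mem_filter] at hi; exact hi.2.1
    have hy : yb i = 0 := by simp only [a00, Finset.mem_filter] at hi; exact hi.2.2
    by_cases h2 : wbar (iS2 i) ≤ 0
    · exact Or.inr h2
    · push_neg at h2
      left
      have hev : ∀ᶠ k in atTop,
          0 < (Mk k).nu i + ((Mk k).etaGe i - (Mk k).etaLe i) * X k i :=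
        (hs2T i hy).eventually (eventually_gt_nhds h2)
      have h0 : Tendsto (fun k => ((Mk k).etaGe i - (Mk k).etaLe i) * Y k i) atTop (𝓝 0) := by
        refine Tendsto.congr' ?_ tendsto_const_nhds
        filter_upwards [hev] with k hk
        exact (sigma_sign (htpos k) (hK k) (hzero k).2.2.1 (hzero k).2.2.2.1
          (hzero k).2.2.2.2 i hk).symm
      exact tendsto_nhds_unique (hs1T i hx) h0
  · -- the T-stationarity equation
    have h := hTbar
    rw [hvbar, Tmap_vfam] at h
    simp only [Pi.zero_apply, zero_smul, add_zero] at h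
    rw [filter_x_eq D hfeas, filter_y_eq D hfeas, Finset.sum_union (disj_a01_a00 xb yb),
      Finset.sum_union (disj_a10_a00 xb yb), hcbar] at h
    show ((grad D.f xb, D.c) : Vec n × Vec n) = _
    rw [← h]
    dsimp only
    simp only [Finset.sum_add_distrib]
    abel
  · -- sig1 convergence on a01
    intro i hi
    have hx : xb i = 0 := by simp only [a01, Finset.mem_filter] at hi; exact hi.2.1
    exact hs1T i hx
  · -- sig2 convergence on a10
    intro i hi
    have hy : yb i = 0 := by simp only [a10, Finset.mem_filter] at hi; exact hi.2.2
    exact hs2T i hy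
  · -- rho convergence on a00
    intro i hi
    have hx : xb i = 0 := by simp only [a00, Finset.mem_filter] at hi; exact hi.2.1
    have hy : yb i = 0 := by simp only [a00, Finset.mem_filter] at hi; exact hi.2.2
    exact ⟨hs1T i hx, hs2T i hy⟩

end Scholtes
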